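/- Fix m ≥ 1 and let 𝒞'_pmon be the concept class over {0,1}^{m+1} containing, for each I ⊆ {1,…,m}, the concept C'_I defined by C'_I(b_1,…,b_m,0) = C_I(b_1,…,b_m) and C'_I(b_1,…,b_m,1) = 1 − C_I(b_1,…,b_m), where C_I ∈ 𝒞^m_pmon, and no other concepts. Then S[MQ](𝒞'_pmon) = S^d_min(𝒞'_pmon) = S^d_prox(𝒞'_pmon) = m, where d is the Hamming distance on {0,1}^{m+1}. -/

import Mathlib

open scoped NNReal

/-- The interaction game for learning from a contrast oracle:
`Identifiable pt CS n V` holds iff the learner can guarantee, within at most `n` rounds,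
that the version space (starting from `V`) becomes a singleton `{C*}` (i.e. a subsingleton,
since the target always stays in the version space), against every target `C* ∈ V` and
every adversarial choice of contrastive examples from the contrast set `CS`.
A query has type `Q`; `pt q` is the instance whose label is returned; `CS q C V` is the
contrast set of the query `q` w.r.t. concept `C` and current version space `V`. -/
def Identifiable {X Q : Type*} (pt : Q → X)
    (CS : Q → (X → Bool) → Set (X → Bool) → Set X) :
    ℕ → Set (X → Bool) → Prop
  | 0, V => V.Subsingleton
  | n + 1, V =>
      V.Subsingleton ∨
        ∃ q : Q, ∀ Cstar ∈ V,
          ((CS q Cstar V = ∅ →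
            Identifiable pt CS n
              {C ∈ V | C (pt q) = Cstar (pt q) ∧ CS q C V = ∅}) ∧
          (∀ x' ∈ CS q Cstar V,
            Identifiable pt CS n
              {C ∈ V | C (pt q) = Cstar (pt q) ∧ x' ∈ CS q C V ∧ C x' = Cstar x'}))

/-- The contrast sample complexity of class `𝓒` (as an extended natural number):
the least `n` such that some learner identifies every target within `n` rounds. -/
noncomputable def sampleComplexity {X Q : Type*} (pt : Q → X)
    (CS : Q → (X → Bool) → Set (X → Bool) → Set X) (𝓒 : Set (X → Bool)) : ℕ∞ :=
  sInf {n : ℕ∞ | ∃ k : ℕ, n = (k : ℕ∞) ∧ Identifiable pt CS k 𝓒}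

/-- Minimum-distance contrast set: points of opposite label at minimal `d`-distance. -/
def CSmin {X : Type*} (d : X → X → ℝ≥0) (x : X) (C : X → Bool) : Set X :=
  {x' | C x' ≠ C x ∧ ∀ x'' : X, C x'' ≠ C x → d x x' ≤ d x x''}

/-- Sample complexity in the minimum-distance model. -/
noncomputable def Smin {X : Type*} (d : X → X → ℝ≥0) (𝓒 : Set (X → Bool)) : ℕ∞ :=
  sampleComplexity (id : X → X) (fun x C _ => CSmin d x C) 𝓒

/-- Proximity contrast set: points of opposite label within distance `r` of `x`. -/
def CSprox {X : Type*} (d : X → X → ℝ≥0) (x : X) (r : ℝ≥0) (C : X → Bool) : Set X :=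
  {x' | C x' ≠ C x ∧ d x x' ≤ r}

/-- Sample complexity in the proximity model (queries are pairs `(x, r)`). -/
noncomputable def Sprox {X : Type*} (d : X → X → ℝ≥0) (𝓒 : Set (X → Bool)) : ℕ∞ :=
  sampleComplexity (Prod.fst : X × ℝ≥0 → X) (fun q C _ => CSprox d q.1 q.2 C) 𝓒

/-- Membership-query complexity: the contrast sets are always empty,
so the oracle only ever returns the label of the queried point. -/
noncomputable def SMQ {X : Type*} (𝓒 : Set (X → Bool)) : ℕ∞ :=
  sampleComplexity (id : X → X) (fun _ _ _ => (∅ : Set X)) 𝓒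

/-- The class `𝒞'_pmon` over `{0,1}^{m+1}`: for each `I ⊆ {1,…,m}` the concept
agreeing with the monotone monomial `C_I` on points whose last coordinate is 0, and
with its negation on points whose last coordinate is 1. -/
def pmonExtClass (m : ℕ) : Set ((Fin (m + 1) → Bool) → Bool) :=
  {C | ∃ I : Finset (Fin m),
    C = fun b => xor (b (Fin.last m)) (decide (∀ i ∈ I, b i.castSucc = true))}


open scoped Classical

section Aux

/-- The concept with index `I`. -/
private def fC (m : ℕ) (I : Finset (Fin m)) : (Fin (m + 1) → Bool) → Bool :=
  fun b => xor (b (Fin.last m)) (decide (∀ i ∈ I, b i.castSucc = true))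

/-- The query point probing coordinate `j`. -/
private def xq (m : ℕ) (j : Fin m) : Fin (m + 1) → Bool := fun i => decide (i ≠ j.castSucc)

private lemma fC_xq (m : ℕ) (I : Finset (Fin m)) (j : Fin m) :
    fC m I (xq m j) = decide (j ∈ I) := by
  have h1 : xq m j (Fin.last m) = true := by
    simp [xq, (Fin.castSucc_lt_last j).ne']
  have h2 : (decide (∀ i ∈ I, xq m j i.castSucc = true)) = decide (j ∉ I) := by
    simp only [xq, decide_eq_true_eq, decide_eq_decide]
    constructor
    · intro h hj; exact (h j hj) rfl
    · intro hj i hi hij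
      exact hj ((Fin.castSucc_injective m hij) ▸ hi)
  simp [fC, h1, h2, Bool.true_xor]

private lemma fC_injective (m : ℕ) : Function.Injective (fC m) := by
  intro I J h
  ext j
  have := congrFun h (xq m j)
  rw [fC_xq, fC_xq] at this
  simpa using this

private lemma pmonExtClass_eq_range (m : ℕ) : pmonExtClass m = Set.range (fC m) := by
  ext C
  constructor
  · rintro ⟨I, rfl⟩; exact ⟨I, rfl⟩
  · rintro ⟨I, rfl⟩; exact ⟨I, rfl⟩

private lemma ncard_pmon (m : ℕ) : (pmonExtClass m).ncard = 2 ^ m := by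
  rw [pmonExtClass_eq_range, ← Nat.card_coe_set_eq,
    Nat.card_range_of_injective (fC_injective m), Nat.card_eq_fintype_card,
    Fintype.card_finset, Fintype.card_fin]

/-- flip the last coordinate -/
private def fl (m : ℕ) (x : Fin (m + 1) → Bool) : Fin (m + 1) → Bool :=
  Function.update x (Fin.last m) (!x (Fin.last m))

private lemma fC_fl (m : ℕ) (I : Finset (Fin m)) (x : Fin (m + 1) → Bool) :
    fC m I (fl m x) = !(fC m I x) := by
  have h1 : fl m x (Fin.last m) = !x (Fin.last m) := Function.update_self _ _ _
  have h2 : ∀ i : Fin m, fl m x i.castSucc = x i.castSucc := fun i =>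
    Function.update_of_ne (Fin.castSucc_lt_last i).ne _ _
  simp only [fC, h1, h2]
  cases x (Fin.last m) <;> cases decide (∀ i ∈ I, x i.castSucc = true) <;> rfl

private lemma mem_fl (m : ℕ) {C : (Fin (m + 1) → Bool) → Bool}
    (hC : C ∈ pmonExtClass m) (x : Fin (m + 1) → Bool) : C (fl m x) = !(C x) := by
  rw [pmonExtClass_eq_range] at hC
  obtain ⟨I, rfl⟩ := hC
  exact fC_fl m I x

private lemma hammingDist_fl (m : ℕ) (x : Fin (m + 1) → Bool) :
    hammingDist x (fl m x) = 1 := by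
  have : ({i | x i ≠ fl m x i} : Finset (Fin (m + 1))) = {Fin.last m} := by
    ext i
    by_cases hi : i = Fin.last m
    · subst hi; rw [Finset.mem_filter]; simp [fl]
    · rw [Finset.mem_filter]; simp [fl, Function.update_of_ne hi, hi]
  rw [hammingDist, this, Finset.card_singleton]

private lemma ncard_le_of_subsingleton {α : Type*} {s : Set α} (h : s.Subsingleton) :
    s.ncard ≤ 1 := by
  rcases s.eq_empty_or_nonempty with rfl | ⟨a, ha⟩
  · simp
  · have : s ⊆ {a} := fun b hb => h hb ha
    calc s.ncard ≤ ({a} : Set α).ncard := Set.ncard_le_ncard this (Set.finite_singleton a)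
    _ = 1 := Set.ncard_singleton a

/-- Generic lower bound: if, at every query, the adversary can reply in a way that
reveals only the label of the queried point, then an identifiable version space has
at most `2 ^ n` concepts. -/
private lemma LBgen {X Q : Type*} [Finite X] (pt : Q → X)
    (CS : Q → (X → Bool) → Set (X → Bool) → Set X) (𝓒 : Set (X → Bool))
    (H : ∀ q (V : Set (X → Bool)), V ⊆ 𝓒 → ∀ Cstar ∈ V,
      (CS q Cstar V = ∅ ∧ ∀ C ∈ V, C (pt q) = Cstar (pt q) → CS q C V = ∅) ∨
      (∃ x' ∈ CS q Cstar V, ∀ C ∈ V, C (pt q) = Cstar (pt q) →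
        x' ∈ CS q C V ∧ C x' = Cstar x')) :
    ∀ (n : ℕ) (V : Set (X → Bool)), V ⊆ 𝓒 → Identifiable pt CS n V →
      V.ncard ≤ 2 ^ n := by
  intro n
  induction n with
  | zero => intro V _ h; simpa using ncard_le_of_subsingleton h
  | succ n ih =>
    intro V hV hid
    rcases hid with hsub | ⟨q, hq⟩
    · calc V.ncard ≤ 1 := ncard_le_of_subsingleton hsub
      _ ≤ 2 ^ (n + 1) := Nat.one_le_two_pow
    · set B : Bool → Set (X → Bool) := fun b => {C ∈ V | C (pt q) = b} with hB
      have hBsub : ∀ b, B b ⊆ V := fun b C hC => hC.1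
      have key : ∀ b, (B b).ncard ≤ 2 ^ n := by
        intro b
        rcases (B b).eq_empty_or_nonempty with he | ⟨Cstar, hCs⟩
        · simp [he]
        · have hCV : Cstar ∈ V := hCs.1
          have hCb : Cstar (pt q) = b := hCs.2
          have hBeq1 : ∀ (P : (X → Bool) → Prop),
              (∀ C ∈ V, C (pt q) = Cstar (pt q) → P C) →
              {C ∈ V | C (pt q) = Cstar (pt q) ∧ P C} = B b := by
            intro P hP
            ext C
            constructor
            · rintro ⟨h1, h2, _⟩; exact ⟨h1, h2.trans hCb⟩
            · rintro ⟨h1, h2⟩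
              have hag : C (pt q) = Cstar (pt q) := h2.trans hCb.symm
              exact ⟨h1, hag, hP C h1 hag⟩
          rcases H q V hV Cstar hCV with ⟨hemp, hall⟩ | ⟨x', hx', hall⟩
          · have hid' := (hq Cstar hCV).1 hemp
            rw [hBeq1 _ hall] at hid'
            exact ih (B b) ((hBsub b).trans hV) hid'
          · have hall' : ∀ C ∈ V, C (pt q) = Cstar (pt q) →
                x' ∈ CS q C V ∧ C x' = Cstar x' := hall
            have hid' := (hq Cstar hCV).2 x' hx'
            rw [hBeq1 _ hall'] at hid'
            exact ih (B b) ((hBsub b).trans hV) hid'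
      have hVeq : V = B true ∪ B false := by
        ext C
        constructor
        · intro hC
          cases hb : C (pt q)
          · exact Or.inr ⟨hC, hb⟩
          · exact Or.inl ⟨hC, hb⟩
        · rintro (h | h) <;> exact h.1
      have hdisj : Disjoint (B true) (B false) := by
        rw [Set.disjoint_left]
        rintro C ⟨_, h1⟩ ⟨_, h2⟩
        simp [h1] at h2
      calc V.ncard = (B true).ncard + (B false).ncard := by
            rw [hVeq, Set.ncard_union_eq hdisj (Set.toFinite _) (Set.toFinite _)]
      _ ≤ 2 ^ n + 2 ^ n := Nat.add_le_add (key true) (key false)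
      _ = 2 ^ (n + 1) := by ring

/-- undetermined coordinates of a version space -/
private noncomputable def undet (m : ℕ) (V : Set ((Fin (m + 1) → Bool) → Bool)) :
    Finset (Fin m) :=
  Finset.univ.filter (fun j => ¬ ∀ C ∈ V, ∀ C' ∈ V, C (xq m j) = C' (xq m j))

private lemma subsingleton_of_undet_empty {m : ℕ} {V : Set ((Fin (m + 1) → Bool) → Bool)}
    (hV : V ⊆ pmonExtClass m) (h : undet m V = ∅) : V.Subsingleton := by
  intro C hC C' hC'
  obtain ⟨I, rfl⟩ := (pmonExtClass_eq_range m) ▸ hV hC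
  obtain ⟨J, rfl⟩ := (pmonExtClass_eq_range m) ▸ hV hC'
  have hIJ : I = J := by
    ext j
    have hj : j ∉ undet m V := by rw [h]; exact Finset.notMem_empty j
    simp only [undet, Finset.mem_filter, Finset.mem_univ, true_and, not_not] at hj
    have := hj _ hC _ hC'
    rw [fC_xq m I j, fC_xq m J j] at this
    simpa using this
  rw [hIJ]

/-- Generic upper bound: `m` queries always suffice, whatever the contrast mapping is,
as long as the learner can probe each point `xq m j`. -/
private lemma UBgen {m : ℕ} {Q : Type*} (pt : Q → (Fin (m + 1) → Bool))
    (CS : Q → ((Fin (m + 1) → Bool) → Bool) → Set ((Fin (m + 1) → Bool) → Bool) →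
      Set (Fin (m + 1) → Bool))
    (hq : ∀ j : Fin m, ∃ q, pt q = xq m j) :
    ∀ (n : ℕ) (V : Set ((Fin (m + 1) → Bool) → Bool)), V ⊆ pmonExtClass m →
      (undet m V).card ≤ n → Identifiable pt CS n V := by
  intro n
  induction n with
  | zero =>
    intro V hV hc
    have : undet m V = ∅ := Finset.card_eq_zero.mp (Nat.le_zero.mp hc)
    exact subsingleton_of_undet_empty hV this
  | succ n ih =>
    intro V hV hc
    rcases Finset.eq_empty_or_nonempty (undet m V) with he | ⟨j, hj⟩
    · exact Or.inl (subsingleton_of_undet_empty hV he)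
    · obtain ⟨q, hptq⟩ := hq j
      refine Or.inr ⟨q, fun Cstar hCstar => ?_⟩
      have step : ∀ (V' : Set ((Fin (m + 1) → Bool) → Bool)),
          V' ⊆ V → (∀ C ∈ V', C (pt q) = Cstar (pt q)) →
          Identifiable pt CS n V' := by
        intro V' hsub hagree
        apply ih V' (hsub.trans hV)
        have h1 : undet m V' ⊆ (undet m V).erase j := by
          intro j' hj'
          simp only [undet, Finset.mem_filter, Finset.mem_univ, true_and] at hj'
          rw [Finset.mem_erase]
          constructor
          · rintro rfl
            apply hj'
            intro C hC C' hC'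
            rw [hptq] at hagree
            rw [hagree C hC, hagree C' hC']
          · simp only [undet, Finset.mem_filter, Finset.mem_univ, true_and]
            intro hfa
            exact hj' (fun C hC C' hC' => hfa C (hsub hC) C' (hsub hC'))
        calc (undet m V').card ≤ ((undet m V).erase j).card := Finset.card_le_card h1
        _ = (undet m V).card - 1 := Finset.card_erase_of_mem hj
        _ ≤ n := by omega
      constructor
      · intro _
        exact step _ (fun C hC => hC.1) (fun C hC => hC.2.1)
      · intro x' _
        exact step _ (fun C hC => hC.1) (fun C hC => hC.2.1)

private lemma UB_top {m : ℕ} {Q : Type*} (pt : Q → (Fin (m + 1) → Bool))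
    (CS : Q → ((Fin (m + 1) → Bool) → Bool) → Set ((Fin (m + 1) → Bool) → Bool) →
      Set (Fin (m + 1) → Bool))
    (hq : ∀ j : Fin m, ∃ q, pt q = xq m j) :
    Identifiable pt CS m (pmonExtClass m) :=
  UBgen pt CS hq m _ subset_rfl
    (le_trans (Finset.card_filter_le _ _) (by simp))

/-- Combining the two bounds into the value of the sample complexity. -/
private lemma sc_eq {m : ℕ} {Q : Type*} (pt : Q → (Fin (m + 1) → Bool))
    (CS : Q → ((Fin (m + 1) → Bool) → Bool) → Set ((Fin (m + 1) → Bool) → Bool) →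
      Set (Fin (m + 1) → Bool))
    (hq : ∀ j : Fin m, ∃ q, pt q = xq m j)
    (H : ∀ q (V : Set ((Fin (m + 1) → Bool) → Bool)), V ⊆ pmonExtClass m →
      ∀ Cstar ∈ V,
      (CS q Cstar V = ∅ ∧ ∀ C ∈ V, C (pt q) = Cstar (pt q) → CS q C V = ∅) ∨
      (∃ x' ∈ CS q Cstar V, ∀ C ∈ V, C (pt q) = Cstar (pt q) →
        x' ∈ CS q C V ∧ C x' = Cstar x')) :
    sampleComplexity pt CS (pmonExtClass m) = (m : ℕ∞) := by
  apply le_antisymm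
  · exact sInf_le ⟨m, rfl, UB_top pt CS hq⟩
  · apply le_sInf
    rintro n ⟨k, rfl, hk⟩
    have h1 : (pmonExtClass m).ncard ≤ 2 ^ k :=
      LBgen pt CS (pmonExtClass m) H k _ subset_rfl hk
    rw [ncard_pmon] at h1
    have : m ≤ k := (Nat.pow_le_pow_iff_right (by norm_num)).mp h1
    exact_mod_cast this

end Aux

/-- For `m ≥ 1`, the membership-query complexity, the
minimum-distance sample complexity and the proximity-model sample complexity of
`𝒞'_pmon` (under the Hamming distance on `{0,1}^{m+1}`) all equal `m`. -/
theorem statement6 (m : ℕ) (hm : 1 ≤ m) :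
    SMQ (pmonExtClass m) = (m : ℕ∞) ∧
    Smin (fun a b => ((hammingDist a b : ℕ) : ℝ≥0)) (pmonExtClass m) = (m : ℕ∞) ∧
    Sprox (fun a b => ((hammingDist a b : ℕ) : ℝ≥0)) (pmonExtClass m) = (m : ℕ∞) := by
  classical
  set d : (Fin (m + 1) → Bool) → (Fin (m + 1) → Bool) → ℝ≥0 :=
    fun a b => ((hammingDist a b : ℕ) : ℝ≥0) with hd
  have hq_id : ∀ j : Fin m, ∃ q : Fin (m + 1) → Bool, id q = xq m j :=
    fun j => ⟨xq m j, rfl⟩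
  have hd_pos : ∀ x x'' : Fin (m + 1) → Bool, x'' ≠ x → (1 : ℝ≥0) ≤ d x x'' := by
    intro x x'' hne
    have : 1 ≤ hammingDist x x'' := by
      rcases Nat.eq_zero_or_pos (hammingDist x x'') with h0 | h1
      · exact absurd (hammingDist_eq_zero.mp h0).symm hne
      · exact h1
    simp only [hd]
    exact_mod_cast this
  have hd_fl : ∀ x : Fin (m + 1) → Bool, d x (fl m x) = 1 := by
    intro x
    simp [hd, hammingDist_fl m x]
  refine ⟨?_, ?_, ?_⟩
  · -- membership queries
    apply sc_eq _ _ hq_id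
    intro q V hV Cstar hCs
    exact Or.inl ⟨rfl, fun _ _ _ => rfl⟩
  · -- minimum-distance model
    apply sc_eq _ _ hq_id
    intro q V hV Cstar hCs
    have hmem : ∀ C ∈ pmonExtClass m, fl m q ∈ CSmin d q C := by
      intro C hC
      refine ⟨?_, ?_⟩
      · rw [mem_fl m hC q]
        simp
      · intro x'' hx''
        have hne : x'' ≠ q := by
          intro h; rw [h] at hx''; exact hx'' rfl
        rw [hd_fl q]
        exact hd_pos q x'' hne
    refine Or.inr ⟨fl m q, hmem Cstar (hV hCs), fun C hC hag => ?_⟩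
    refine ⟨hmem C (hV hC), ?_⟩
    rw [mem_fl m (hV hC) q, mem_fl m (hV hCs) q]
    simp only [id] at hag
    rw [hag]
  · -- proximity model
    have hq_prox : ∀ j : Fin m, ∃ q : (Fin (m + 1) → Bool) × ℝ≥0,
        q.1 = xq m j := fun j => ⟨(xq m j, 0), rfl⟩
    apply sc_eq _ _ hq_prox
    rintro ⟨x, r⟩ V hV Cstar hCs
    rcases lt_or_ge r 1 with hr | hr
    · refine Or.inl ⟨?_, fun C _ _ => ?_⟩ <;>
      · ext x''
        simp only [CSprox, Set.mem_setOf_eq, Set.mem_empty_iff_false, iff_false,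
          not_and]
        intro hlab
        have hne : x'' ≠ x := by
          intro h; rw [h] at hlab; exact hlab rfl
        intro hle
        exact absurd (le_trans (hd_pos x x'' hne) hle) (not_le.mpr hr)
    · have hmem : ∀ C ∈ pmonExtClass m, fl m x ∈ CSprox d x r C := by
        intro C hC
        refine ⟨?_, ?_⟩
        · rw [mem_fl m hC x]
          simp
        · rw [hd_fl x]; exact hr
      refine Or.inr ⟨fl m x, hmem Cstar (hV hCs), fun C hC hag => ?_⟩
      refine ⟨hmem C (hV hC), ?_⟩
      rw [mem_fl m (hV hC) x, mem_fl m (hV hCs) x]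
      simp only at hag
      rw [hag]
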